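/- arXiv:1305.4906 — 4 statements merged into one kernel-verified Lean document; each statement's English description precedes it below -/
import Mathlib

section
/- Let (V,q) be a quadratic space over a field k of characteristic ≠ 2 and let t be an isometry of (V,q). Then the minimal polynomial f of t satisfies f(X) = ε·X^{deg f}·f(1/X) with ε = f(0) ∈ {1,−1}, and likewise the characteristic polynomial F of t satisfies F(X) = F(0)·X^{deg F}·F(1/X) with F(0) ∈ {1,−1}. -/
open Polynomial

noncomputable section

variable {k : Type} [Field k]

/-- `f*(X) = f(0)⁻¹ X^{deg f} f(1/X)`. -/
def starPoly (f : k[X]) : k[X] := Polynomial.C (f.coeff 0)⁻¹ * f.reverse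

/-- Type 0 : a product of powers of `X - 1` and `X + 1`. -/
def IsType0Pol (f : k[X]) : Prop := ∃ a b : ℕ, f = (X - 1 : k[X]) ^ a * (X + 1) ^ b

/-- Type 1 : a product of (powers of) monic symmetric irreducible polynomials of even degree. -/
def IsType1Pol (f : k[X]) : Prop :=
  ∃ s : Multiset k[X],
    (∀ g ∈ s, g.Monic ∧ Irreducible g ∧ g = g.reverse ∧ Even g.natDegree) ∧ f = s.prod

/-- Type 2 : a product of polynomials `g * g*` with `g` monic irreducible, `g ≠ ±g*`. -/
def IsType2Pol (f : k[X]) : Prop :=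
  ∃ s : Multiset k[X],
    (∀ g ∈ s, g.Monic ∧ Irreducible g ∧ g ≠ starPoly g ∧ g ≠ -starPoly g) ∧
    f = (s.map fun g => g * starPoly g).prod

/-- A monic polynomial is hyperbolic if it is of the form `G·G*`; equivalently, all its
components of type 0 and 1 occur with an even exponent. -/
def IsHyperbolicPoly (f : k[X]) : Prop := ∃ g : k[X], g.Monic ∧ f = g * starPoly g

/-- Data describing a self-dual torsion `k[X]`-module which is finite dimensional over `k`:
the direct sum, over `i`, of `[k[X]/(f i ^ e i)]^(n i)`, where each `f i` is monic
irreducible, and where the collection is self-dual (stable under `f ↦ f*`). -/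
structure ModuleData (k : Type) [Field k] where
  ι : Type
  [fin : Fintype ι]
  f : ι → k[X]
  e : ι → ℕ
  n : ι → ℕ
  monic : ∀ i, (f i).Monic
  irr : ∀ i, Irreducible (f i)
  epos : ∀ i, 0 < e i
  npos : ∀ i, 0 < n i
  selfdual : ∃ σ : Equiv.Perm ι,
    ∀ i, f (σ i) = starPoly (f i) ∧ e (σ i) = e i ∧ n (σ i) = n i

attribute [instance] ModuleData.fin

namespace ModuleData

variable (D : ModuleData k)

/-- The underlying `K[X]`-module of `M ⊗_k K`, realised concretely, for an extension
`ι : k →+* K`. -/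
abbrev SpaceVia {K : Type} [Field K] (ι : k →+* K) : Type :=
  (i : D.ι) → Fin (D.n i) →
    (Polynomial K ⧸ Ideal.span {((D.f i).map ι) ^ D.e i})

/-- The dimension of `M` as a `k`-vector space. -/
def dim : ℕ := ∑ i, D.n i * (D.e i * (D.f i).natDegree)

/-- The characteristic polynomial `F_M` of `M`. -/
def charPoly : k[X] := ∏ i, D.f i ^ (D.n i * D.e i)

/-- The summand `i` is of type 0 : `f i` is `X - 1` or `X + 1`. -/
def IsIdx0 (i : D.ι) : Prop := D.f i = X - 1 ∨ D.f i = X + 1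

/-- The summand `i` is of type 1 : `f i` is symmetric of even degree. -/
def IsIdx1 (i : D.ι) : Prop := D.f i = (D.f i).reverse ∧ Even (D.f i).natDegree

/-- The summand `i` is of type 2 : `f i` is not self-dual. -/
def IsIdx2 (i : D.ι) : Prop := D.f i ≠ starPoly (D.f i)

open Classical in
/-- `dim_k M⁰`. -/
def dim0 : ℕ := ∑ i, if D.IsIdx0 i then D.n i * (D.e i * (D.f i).natDegree) else 0

open Classical in
/-- `dim_k M¹`. -/
def dim1 : ℕ := ∑ i, if D.IsIdx1 i then D.n i * (D.e i * (D.f i).natDegree) else 0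

open Classical in
/-- `dim_k M²`. -/
def dim2 : ℕ := ∑ i, if D.IsIdx2 i then D.n i * (D.e i * (D.f i).natDegree) else 0

/-- `M` is semi-simple : all exponents are 1. -/
def Semisimple : Prop := ∀ i, D.e i = 1

/-- `M̄_odd` : the direct sum of the summands `[k[X]/(f)]^n`, over those summands
`[k[X]/(f^e)]^n` of `M` with `e` odd and `f` self-dual (`f = f*`). -/
def oddBar : ModuleData k where
  ι := {i : D.ι // Odd (D.e i) ∧ D.f i = starPoly (D.f i)}
  fin := by classical exact inferInstance
  f i := D.f i.1
  e _ := 1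
  n i := D.n i.1
  monic i := D.monic i.1
  irr i := D.irr i.1
  epos _ := one_pos
  npos i := D.npos i.1
  selfdual := ⟨Equiv.refl _, fun i => ⟨i.2.2, rfl, rfl⟩⟩

end ModuleData

theorem starPoly_eq_self_of_symm {f : k[X]} (hm : f.Monic) (hs : f = f.reverse) :
    starPoly f = f := by
  have h0 : f.coeff 0 = 1 := by
    conv_lhs => rw [hs]
    rw [Polynomial.coeff_zero_reverse]
    exact hm
  rw [starPoly, h0, inv_one, map_one, one_mul, ← hs]

/-- The module `[k[X]/(f)]^m` for a monic symmetric irreducible `f`. -/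
def ModuleData.single (f : k[X]) (hmon : f.Monic) (hirr : Irreducible f)
    (hsym : f = f.reverse) (m : ℕ) (hm : 0 < m) : ModuleData k where
  ι := Unit
  fin := inferInstance
  f _ := f
  e _ := 1
  n _ := m
  monic _ := hmon
  irr _ := hirr
  epos _ := one_pos
  npos _ := hm
  selfdual := ⟨Equiv.refl _, fun _ => ⟨(starPoly_eq_self_of_symm hmon hsym).symm, rfl, rfl⟩⟩

section Bilin

variable {V : Type} [AddCommGroup V] [Module k V]

/-- `t` is an isometry of the bilinear space `(V, B)`. -/
def IsIsometryOf (B : LinearMap.BilinForm k V) (t : V ≃ₗ[k] V) : Prop :=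
  ∀ x y, B (t x) (t y) = B x y

/-- `(V, B)` is a quadratic space : `B` is a symmetric bilinear form of non-zero
determinant (equivalently, non-degenerate). -/
def IsQuadraticSpace (B : LinearMap.BilinForm k V) : Prop :=
  (∀ x y, B x y = B y x) ∧ (∀ x, (∀ y, B x y = 0) → x = 0)

/-- The bilinear space `(W, B)` over an extension `ι : k →+* K` has an isometry whose
associated `K[X]`-module is `M ⊗_k K`. -/
def HasIsometryWithModuleVia {K : Type} [Field K] (ι : k →+* K)
    {W : Type} [AddCommGroup W] [Module K W]
    (B : LinearMap.BilinForm K W) (D : ModuleData k) : Prop :=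
  ∃ t : W ≃ₗ[K] W, IsIsometryOf B t ∧
    ∃ φ : W ≃ₗ[K] D.SpaceVia ι, ∀ w, φ (t w) = (X : Polynomial K) • φ w

/-- `(V, B)` has an isometry with module `M`. -/
def HasIsometryWithModule (B : LinearMap.BilinForm k V) (D : ModuleData k) : Prop :=
  HasIsometryWithModuleVia (RingHom.id k) B D

/-- The bilinear space `(W, B)` over an extension `ι : k →+* K` has an isometry with
minimal polynomial (the image of) `f`. -/
def HasIsometryWithMinpolyVia {K : Type} [Field K] (ι : k →+* K)
    {W : Type} [AddCommGroup W] [Module K W]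
    (B : LinearMap.BilinForm K W) (f : k[X]) : Prop :=
  ∃ t : W ≃ₗ[K] W, IsIsometryOf B t ∧ minpoly K t.toLinearMap = f.map ι

/-- `(V, B)` has an isometry with minimal polynomial `f`. -/
def HasIsometryWithMinpoly (B : LinearMap.BilinForm k V) (f : k[X]) : Prop :=
  ∃ t : V ≃ₗ[k] V, IsIsometryOf B t ∧ minpoly k t.toLinearMap = f

/-- A (2n)-dimensional quadratic space is hyperbolic if it has a self-orthogonal subspace
of dimension n. -/
def IsHyperbolicSpace (B : LinearMap.BilinForm k V) : Prop :=
  ∃ W : Submodule k V, (∀ x ∈ W, ∀ y ∈ W, B x y = 0) ∧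
    2 * Module.finrank k W = Module.finrank k V

/-- The Witt index : the largest dimension of a totally isotropic subspace. -/
def wittIndex (B : LinearMap.BilinForm k V) : ℕ :=
  sSup {m | ∃ W : Submodule k V, (∀ x ∈ W, ∀ y ∈ W, B x y = 0) ∧ Module.finrank k W = m}

variable [FiniteDimensional k V]

/-- The Gram matrix of `B` with respect to a fixed basis. -/
def gramOf (B : LinearMap.BilinForm k V) :
    Matrix (Fin (Module.finrank k V)) (Fin (Module.finrank k V)) k :=
  LinearMap.toMatrix₂ (Module.finBasis k V) (Module.finBasis k V) B

/-- The determinant of `B` (well defined modulo nonzero squares). -/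
def detOf (B : LinearMap.BilinForm k V) : k := (gramOf B).det

end Bilin

open Matrix

section AuxIsometry

variable {m : Type} [Fintype m] [DecidableEq m]

section Conj

variable {P Q : Matrix m m k} (h1 : P * Q = 1) (h2 : Q * P = 1)

include h1 h2

lemma aux_conj_pow (A : Matrix m m k) (d : ℕ) :
    (Q * A * P) ^ d = Q * A ^ d * P := by
  induction d with
  | zero => simpa using h2.symm
  | succ d ih =>
    calc (Q * A * P) ^ (d + 1) = Q * A ^ d * P * (Q * A * P) := by rw [pow_succ, ih]
      _ = Q * A ^ d * (P * Q) * A * P := by simp only [mul_assoc]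
      _ = Q * A ^ (d + 1) * P := by rw [h1, mul_one, pow_succ, mul_assoc Q]

lemma aux_aeval_conj (A : Matrix m m k) (p : k[X]) :
    aeval (Q * A * P) p = Q * aeval A p * P := by
  induction p using Polynomial.induction_on' with
  | add p q hp hq => rw [map_add, map_add, hp, hq, mul_add, add_mul]
  | monomial d a =>
    rw [aeval_monomial, aeval_monomial, aux_conj_pow h1 h2]
    calc algebraMap k (Matrix m m k) a * (Q * A ^ d * P)
        = (algebraMap k (Matrix m m k) a * Q) * A ^ d * P := by simp only [mul_assoc]
      _ = (Q * algebraMap k (Matrix m m k) a) * A ^ d * P := by rw [Algebra.commutes]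
      _ = Q * (algebraMap k (Matrix m m k) a * A ^ d) * P := by simp only [mul_assoc]

lemma aux_minpoly_conj_dvd (A : Matrix m m k) :
    minpoly k A ∣ minpoly k (Q * A * P) := by
  apply minpoly.dvd
  have h := aux_aeval_conj h1 h2 A (minpoly k (Q * A * P))
  have h0 : aeval (Q * A * P) (minpoly k (Q * A * P)) = 0 := minpoly.aeval _ _
  rw [h0] at h
  have e : P * (Q * aeval A (minpoly k (Q * A * P)) * P) * Q
      = aeval A (minpoly k (Q * A * P)) := by
    calc P * (Q * aeval A (minpoly k (Q * A * P)) * P) * Q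
        = (P * Q) * aeval A (minpoly k (Q * A * P)) * (P * Q) := by simp only [mul_assoc]
      _ = _ := by rw [h1, one_mul, mul_one]
  rw [← e, ← h]
  simp

lemma aux_minpoly_conj (A : Matrix m m k) :
    minpoly k (Q * A * P) = minpoly k A := by
  have hd1 := aux_minpoly_conj_dvd h1 h2 A
  have hd2 := aux_minpoly_conj_dvd h2 h1 (Q * A * P)
  have e : P * (Q * A * P) * Q = A := by
    calc P * (Q * A * P) * Q = (P * Q) * A * (P * Q) := by simp only [mul_assoc]
      _ = A := by rw [h1, one_mul, mul_one]
  rw [e] at hd2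
  exact Polynomial.eq_of_monic_of_associated
    (minpoly.monic (Matrix.isIntegral _)) (minpoly.monic (Matrix.isIntegral _))
    (associated_of_dvd_dvd hd2 hd1)

lemma aux_charpoly_conj (A : Matrix m m k) :
    Matrix.charpoly (Q * A * P) = Matrix.charpoly A := by
  have mapmul : ∀ (X Y : Matrix m m k), (X * Y).map (C : k →+* k[X]) = X.map C * Y.map C :=
    fun X Y => Matrix.map_mul
  have h1' : P.map (C : k →+* k[X]) * Q.map C = 1 := by
    rw [← mapmul, h1, Matrix.map_one _ (map_zero C) (map_one C)]
  have h2' : Q.map (C : k →+* k[X]) * P.map C = 1 := by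
    rw [← mapmul, h2, Matrix.map_one _ (map_zero C) (map_one C)]
  have hcm : Q.map C * charmatrix A * P.map C = charmatrix (Q * A * P) := by
    rw [charmatrix, charmatrix, mul_sub, sub_mul]
    congr 1
    · calc Q.map (C : k →+* k[X]) * Matrix.scalar m (X : k[X]) * P.map C
          = Matrix.scalar m (X : k[X]) * (Q.map C * P.map C) := by
            rw [← (Matrix.scalar_commute (X : k[X]) (fun r => Commute.all _ r) (Q.map C)).eq]
            simp only [mul_assoc]
        _ = Matrix.scalar m (X : k[X]) := by rw [h2', mul_one]
    · simp only [RingHom.mapMatrix_apply]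
      rw [mapmul, mapmul]
  rw [Matrix.charpoly, ← hcm, det_mul, det_mul, Matrix.charpoly]
  calc (Q.map (C : k →+* k[X])).det * (charmatrix A).det * (P.map C).det
      = (charmatrix A).det * ((Q.map (C : k →+* k[X])).det * (P.map C).det) := by ring
    _ = (charmatrix A).det := by rw [← det_mul, h2', det_one, mul_one]

end Conj

section Transpose

lemma aux_aeval_transpose (A : Matrix m m k) (p : k[X]) :
    aeval Aᵀ p = (aeval A p)ᵀ := by
  induction p using Polynomial.induction_on' with
  | add p q hp hq => rw [map_add, map_add, hp, hq, Matrix.transpose_add]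
  | monomial d a =>
    rw [aeval_monomial, aeval_monomial, Matrix.transpose_mul, Matrix.transpose_pow]
    have : (algebraMap k (Matrix m m k) a)ᵀ = algebraMap k (Matrix m m k) a := by
      rw [Matrix.algebraMap_eq_diagonal, Matrix.diagonal_transpose]
    rw [this, ← Algebra.commutes]

lemma aux_minpoly_transpose (A : Matrix m m k) : minpoly k Aᵀ = minpoly k A := by
  have key : ∀ B : Matrix m m k, minpoly k B ∣ minpoly k Bᵀ := by
    intro B
    apply minpoly.dvd
    have h := aux_aeval_transpose B (minpoly k Bᵀ)
    rw [minpoly.aeval] at h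
    have := congrArg Matrix.transpose h
    simpa using this.symm
  have h2 := key Aᵀ
  rw [Matrix.transpose_transpose] at h2
  exact Polynomial.eq_of_monic_of_associated
    (minpoly.monic (Matrix.isIntegral _)) (minpoly.monic (Matrix.isIntegral _))
    (associated_of_dvd_dvd h2 (key A))

lemma aux_charpoly_transpose (A : Matrix m m k) :
    Matrix.charpoly Aᵀ = Matrix.charpoly A := by
  have h : charmatrix Aᵀ = (charmatrix A)ᵀ := by
    refine Matrix.ext fun i j => ?_
    by_cases h : i = j
    · subst h
      rw [Matrix.transpose_apply, charmatrix_apply_eq, charmatrix_apply_eq,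
        Matrix.transpose_apply]
    · rw [Matrix.transpose_apply, charmatrix_apply_ne _ _ _ h,
        charmatrix_apply_ne _ _ _ (Ne.symm h), Matrix.transpose_apply]
  rw [Matrix.charpoly, h, Matrix.det_transpose, Matrix.charpoly]

end Transpose

section Reflect

variable {P Q : Matrix m m k} (h1 : P * Q = 1) (h2 : Q * P = 1)

include h1

lemma aux_pow_pair (n : ℕ) : P ^ n * Q ^ n = 1 := by
  induction n with
  | zero => simp
  | succ n ih =>
    calc P ^ (n + 1) * Q ^ (n + 1) = P * (P ^ n * Q ^ n) * Q := by
          rw [pow_succ' P, pow_succ Q]; simp only [mul_assoc]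
      _ = 1 := by rw [ih, mul_one, h1]

lemma aux_aeval_reflect (f : k[X]) (N : ℕ) (hf : f.natDegree ≤ N) :
    aeval P (reflect N f) = P ^ N * aeval Q f := by
  revert hf
  refine Polynomial.induction_with_natDegree_le
    (fun f => aeval P (reflect N f) = P ^ N * aeval Q f) N ?_ ?_ ?_ f
  · simp
  · intro n r _ hnN
    rw [reflect_C_mul_X_pow, revAt_le hnN]
    rw [_root_.map_mul, _root_.map_mul, map_pow, map_pow, aeval_X, aeval_X, aeval_C, aeval_C]
    calc algebraMap k (Matrix m m k) r * P ^ (N - n)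
        = algebraMap k (Matrix m m k) r * (P ^ (N - n) * (P ^ n * Q ^ n)) := by
          rw [aux_pow_pair h1, mul_one]
      _ = algebraMap k (Matrix m m k) r * (P ^ N * Q ^ n) := by
          rw [← mul_assoc (P ^ (N - n)), ← pow_add, Nat.sub_add_cancel hnN]
      _ = P ^ N * (algebraMap k (Matrix m m k) r * Q ^ n) := by
          rw [← mul_assoc, Algebra.commutes r (P ^ N), mul_assoc]
  · intro f g _ _ hfe hge
    rw [reflect_add, map_add, map_add, hfe, hge, mul_add]

end Reflect

lemma aux_eval_charpoly {R : Type*} [CommRing R] (A : Matrix m m R) (r : R) :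
    (Matrix.charpoly A).eval r = (Matrix.scalar m r - A).det := by
  rw [Matrix.charpoly, _root_.eval_det, matPolyEquiv_charmatrix, eval_sub, eval_X, eval_C]

lemma aux_charpoly_inv {P Q : Matrix m m k} (h1 : P * Q = 1) (h2 : Q * P = 1) :
    ∃ c : k, c ≠ 0 ∧ Matrix.charpoly Q = C c * (Matrix.charpoly P).reverse := by
  classical
  set n := Fintype.card m with hn
  set F := Matrix.charpoly P with hF
  have hdetPQ : P.det * Q.det = 1 := by rw [← det_mul, h1, det_one]
  refine ⟨(-1) ^ n * Q.det, ?_, ?_⟩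
  · have hQdet : Q.det ≠ 0 := by
      intro h
      rw [h, mul_zero] at hdetPQ
      exact zero_ne_one hdetPQ
    exact mul_ne_zero (pow_ne_zero _ (neg_ne_zero.mpr one_ne_zero)) hQdet
  -- work in the fraction field L of k[X]
  set L := FractionRing k[X]
  set ψ : k[X] →+* L := algebraMap k[X] L with hψdef
  have hψinj : Function.Injective ψ := IsFractionRing.injective k[X] L
  set i : k →+* L := ψ.comp C with hi
  set x : L := ψ X with hx
  have hψ : ∀ p : k[X], ψ p = eval₂ i x p := by
    intro p
    rw [hi, hx, ← Polynomial.hom_eval₂, Polynomial.eval₂_C_X]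
  have hxne : x ≠ 0 := by
    rw [hx, ← map_zero ψ]
    exact fun h => Polynomial.X_ne_zero (hψinj h)
  letI : Invertible x := invertibleOfNonzero hxne
  have hFdeg : F.natDegree = n := Matrix.charpoly_natDegree_eq_dim P
  -- step 1 : ψ (reverse F) = eval₂ i ⅟x F * x ^ n
  have step1 : eval₂ i x (F.reverse) = eval₂ i (⅟x) F * x ^ n := by
    have h := Polynomial.eval₂_reflect_mul_pow i (⅟x) n F (le_of_eq hFdeg)
    rw [invOf_invOf] at h
    have hrev : F.reverse = reflect n F := by rw [Polynomial.reverse, hFdeg]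
    rw [hrev, ← h, mul_assoc, ← mul_pow, invOf_mul_self, one_pow, mul_one]
  -- matrices over L
  set P' : Matrix m m L := P.map i with hP'
  set Q' : Matrix m m L := Q.map i with hQ'
  have mapmul : ∀ (X Y : Matrix m m k), (X * Y).map (i : k →+* L) = X.map i * Y.map i :=
    fun X Y => Matrix.map_mul
  have h1' : P' * Q' = 1 := by rw [hP', hQ', ← mapmul, h1, Matrix.map_one _ (map_zero i) (map_one i)]
  -- ψ (charpoly Q) = det (scalar x - Q')
  have hchQ : ψ (Matrix.charpoly Q) = (Matrix.scalar m x - Q').det := by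
    rw [hψ, eval₂_eq_eval_map, ← Matrix.charpoly_map, aux_eval_charpoly]
  have hchP : eval₂ i (⅟x) F = (Matrix.scalar m (⅟x) - P').det := by
    rw [hF, eval₂_eq_eval_map, ← Matrix.charpoly_map, aux_eval_charpoly]
  -- determinant identity
  have key : Matrix.scalar m x - Q' = Matrix.scalar m x * (-(Matrix.scalar m (⅟x) - P')) * Q' := by
    rw [neg_sub, mul_sub, sub_mul]
    congr 1
    · rw [mul_assoc, h1', mul_one]
    · rw [← _root_.map_mul (Matrix.scalar m), mul_invOf_self, _root_.map_one, one_mul]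
  have hdet : (Matrix.scalar m x - Q').det
      = x ^ n * ((-1) ^ n * (Matrix.scalar m (⅟x) - P').det) * Q'.det := by
    rw [key, det_mul, det_mul, Matrix.det_neg]
    have hsc : (Matrix.scalar m x).det = x ^ n := by
      rw [Matrix.scalar_apply, Matrix.det_diagonal, Finset.prod_const, Finset.card_univ]
    rw [hsc]
  have hQ'det : Q'.det = i Q.det := by
    rw [hQ', ← RingHom.mapMatrix_apply, ← RingHom.map_det]
  -- put everything together
  apply hψinj
  rw [hchQ, hdet, hQ'det, ← hchP]
  rw [map_mul ψ, hψ (C _), eval₂_C, hψ (reverse F), step1]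
  simp only [_root_.map_mul, _root_.map_pow, _root_.map_neg, _root_.map_one]
  ring

end AuxIsometry

lemma aux_symm_of_dvd (f : k[X]) (hm : f.Monic) (h0 : f.coeff 0 ≠ 0)
    (hdvd : f ∣ f.reverse) :
    f = C (f.coeff 0) * f.reverse ∧ (f.coeff 0 = 1 ∨ f.coeff 0 = -1) := by
  obtain ⟨c, hc⟩ := hdvd
  have hfne : f ≠ 0 := hm.ne_zero
  have hrevne : f.reverse ≠ 0 := by simpa [Polynomial.reverse_eq_zero] using hfne
  have hcne : c ≠ 0 := by
    rintro rfl
    rw [mul_zero] at hc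
    exact hrevne hc
  have hdeg : c.natDegree = 0 := by
    have hle : f.reverse.natDegree ≤ f.natDegree := Polynomial.reverse_natDegree_le f
    have h2 : f.reverse.natDegree = f.natDegree + c.natDegree := by
      rw [hc, Polynomial.natDegree_mul hfne hcne]
    omega
  obtain ⟨a, ha⟩ := Polynomial.natDegree_eq_zero.mp hdeg
  subst ha
  have hatop : a = f.coeff 0 := by
    have h1 : f.reverse.coeff f.natDegree = f.coeff 0 := by
      rw [Polynomial.coeff_reverse, Polynomial.revAt_le le_rfl, Nat.sub_self]
    have h2 : (f * C a).coeff f.natDegree = a := by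
      rw [Polynomial.coeff_mul_C, hm.coeff_natDegree, one_mul]
    rw [← h2, ← hc, h1]
  have hsq : f.coeff 0 * f.coeff 0 = 1 := by
    have h3 := congrArg (fun p => Polynomial.coeff p 0) hc
    simp only [Polynomial.coeff_zero_reverse, Polynomial.coeff_mul_C] at h3
    rw [hm.leadingCoeff, hatop] at h3
    exact h3.symm
  refine ⟨?_, mul_self_eq_one_iff.mp hsq⟩
  rw [hc, hatop, mul_comm f (C (f.coeff 0)), ← mul_assoc, ← Polynomial.C_mul, hsq,
    Polynomial.C_1, one_mul]


/-- The minimal and characteristic polynomials of an isometry of a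
quadratic space are `ε`-symmetric, with `ε` the constant term (which is `±1`). -/
theorem minpoly_charpoly_of_isometry_symmetric
    (hchar : (2 : k) ≠ 0)
    {V : Type} [AddCommGroup V] [Module k V] [FiniteDimensional k V]
    (B : LinearMap.BilinForm k V) (hq : IsQuadraticSpace B)
    (t : V ≃ₗ[k] V) (ht : IsIsometryOf B t) :
    (minpoly k t.toLinearMap =
        Polynomial.C ((minpoly k t.toLinearMap).coeff 0) * (minpoly k t.toLinearMap).reverse ∧
      ((minpoly k t.toLinearMap).coeff 0 = 1 ∨ (minpoly k t.toLinearMap).coeff 0 = -1)) ∧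
    (LinearMap.charpoly t.toLinearMap =
        Polynomial.C ((LinearMap.charpoly t.toLinearMap).coeff 0) *
          (LinearMap.charpoly t.toLinearMap).reverse ∧
      ((LinearMap.charpoly t.toLinearMap).coeff 0 = 1 ∨
        (LinearMap.charpoly t.toLinearMap).coeff 0 = -1)) := by
  classical
  set T := t.toLinearMap with hT
  set b := Module.finBasis k V with hb
  set M := LinearMap.toMatrix b b T with hM
  set G := LinearMap.toMatrix₂ b b B with hG
  have hsep : B.SeparatingLeft := hq.2
  have hGdet : G.det ≠ 0 := (LinearMap.separatingLeft_iff_det_ne_zero b).mp hsep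
  have hiso : B.compl₁₂ T T = B := by
    ext x y
    exact ht x y
  have hMG : Mᵀ * G * M = G := by
    have h := LinearMap.toMatrix₂_compl₁₂ (b₁ := b) (b₂ := b) (b₁' := b) (b₂' := b) B T T
    rw [hiso] at h
    exact h.symm
  have hdetM : M.det * M.det = 1 := by
    have h := congrArg Matrix.det hMG
    rw [det_mul, det_mul, det_transpose] at h
    have h2 : (M.det * M.det) * G.det = 1 * G.det := by
      rw [one_mul]
      calc M.det * M.det * G.det = M.det * G.det * M.det := by ring
        _ = G.det := h
    exact mul_right_cancel₀ hGdet h2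
  letI : Invertible M.det := ⟨M.det, hdetM, hdetM⟩
  letI : Invertible M := Matrix.invertibleOfDetInvertible M
  letI : Invertible G := G.invertibleOfIsUnitDet (Ne.isUnit hGdet)
  set Mi : Matrix _ _ k := ⅟M with hMi
  set Gi : Matrix _ _ k := ⅟G with hGi
  have hMMi : M * Mi = 1 := mul_invOf_self M
  have hMiM : Mi * M = 1 := invOf_mul_self M
  have hGGi : G * Gi = 1 := mul_invOf_self G
  have hGiG : Gi * G = 1 := invOf_mul_self G
  have key : Mi = Gi * Mᵀ * G := by
    have h : Mᵀ * G = G * Mi := by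
      calc Mᵀ * G = Mᵀ * G * (M * Mi) := by rw [hMMi, mul_one]
        _ = (Mᵀ * G * M) * Mi := by simp only [mul_assoc]
        _ = G * Mi := by rw [hMG]
    rw [mul_assoc, h, ← mul_assoc, hGiG, one_mul]
  -- minpoly part
  have hfM : minpoly k M = minpoly k T := LinearMap.minpoly_toMatrix b T
  have hFM : M.charpoly = LinearMap.charpoly T := LinearMap.charpoly_toMatrix T b
  have hMi_min : minpoly k Mi = minpoly k T := by
    rw [key, aux_minpoly_conj hGGi hGiG Mᵀ, aux_minpoly_transpose, hfM]
  have hinj : Function.Injective T := t.injective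
  have h0 : (minpoly k T).coeff 0 ≠ 0 := LinearMap.minpoly_coeff_zero_of_injective hinj
  have hmono : (minpoly k T).Monic := minpoly.monic (LinearMap.isIntegral T)
  have hrev0 : aeval M (reflect (minpoly k T).natDegree (minpoly k T)) = 0 := by
    rw [aux_aeval_reflect hMMi _ _ le_rfl, ← hMi_min, minpoly.aeval, mul_zero]
  have hdvd : minpoly k T ∣ (minpoly k T).reverse := by
    have h := minpoly.dvd k M hrev0
    rw [hfM] at h
    exact h
  -- charpoly part
  have hMi_char : Matrix.charpoly Mi = LinearMap.charpoly T := by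
    rw [key, aux_charpoly_conj hGGi hGiG Mᵀ, aux_charpoly_transpose, hFM]
  obtain ⟨c, hc0, hceq⟩ := aux_charpoly_inv hMMi hMiM
  rw [hMi_char, hFM] at hceq
  have hmonoF : (LinearMap.charpoly T).Monic := LinearMap.charpoly_monic T
  have h0F : (LinearMap.charpoly T).coeff 0 ≠ 0 := by
    rw [hceq, Polynomial.coeff_C_mul, Polynomial.coeff_zero_reverse, hmonoF.leadingCoeff,
      mul_one]
    exact hc0
  have hdvdF : LinearMap.charpoly T ∣ (LinearMap.charpoly T).reverse := by
    refine ⟨C c⁻¹, ?_⟩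
    conv_rhs => rw [hceq]
    rw [mul_comm (C c) _, mul_assoc, ← Polynomial.C_mul, mul_inv_cancel₀ hc0,
      Polynomial.C_1, mul_one]
  exact ⟨aux_symm_of_dvd _ hmono h0 hdvd, aux_symm_of_dvd _ hmonoF h0F hdvdF⟩

end
end

section
/- Let k be a field of characteristic ≠ 2 and let F ∈ k[X] be a monic ε-symmetric polynomial (ε = ±1). Then F is a product of monic polynomials of type 0, of type 1 and of type 2. -/
open Polynomial

noncomputable section

variable {k : Type} [Field k]

section AuxLemmas
variable {k : Type} [Field k]

lemma reverse_eq_mirror {p : k[X]} (h : p.coeff 0 ≠ 0) : p.reverse = p.mirror := by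
  have : p.natTrailingDegree = 0 := natTrailingDegree_eq_zero.2 (Or.inr h)
  rw [Polynomial.mirror, this, pow_zero, mul_one]

lemma starPoly_eq {p : k[X]} (h : p.coeff 0 ≠ 0) :
    starPoly p = C (p.coeff 0)⁻¹ * p.mirror := by
  rw [starPoly, reverse_eq_mirror h]

lemma starPoly_mul (f g : k[X]) : starPoly (f * g) = starPoly f * starPoly g := by
  rw [starPoly, starPoly, starPoly, reverse_mul_of_domain, Polynomial.mul_coeff_zero,
    mul_inv, map_mul]
  ring

lemma coeff_zero_starPoly {p : k[X]} (hm : p.Monic) (h : p.coeff 0 ≠ 0) :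
    (starPoly p).coeff 0 = (p.coeff 0)⁻¹ := by
  rw [starPoly, Polynomial.mul_coeff_zero, coeff_C_zero, coeff_zero_reverse, hm.leadingCoeff,
    mul_one]

lemma natDegree_starPoly {p : k[X]} (h : p.coeff 0 ≠ 0) :
    (starPoly p).natDegree = p.natDegree := by
  rw [starPoly_eq h, natDegree_C_mul (inv_ne_zero h), mirror_natDegree]

lemma monic_starPoly {p : k[X]} (hm : p.Monic) (h : p.coeff 0 ≠ 0) :
    (starPoly p).Monic := by
  have hne : p ≠ 0 := hm.ne_zero
  rw [Polynomial.Monic, Polynomial.leadingCoeff, natDegree_starPoly h, starPoly_eq h,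
    coeff_C_mul]
  have : p.mirror.coeff p.natDegree = p.mirror.leadingCoeff := by
    rw [Polynomial.leadingCoeff, mirror_natDegree]
  rw [this, mirror_leadingCoeff, Polynomial.trailingCoeff,
    natTrailingDegree_eq_zero.2 (Or.inr h), inv_mul_cancel₀ h]

lemma starPoly_starPoly {p : k[X]} (hm : p.Monic) (h : p.coeff 0 ≠ 0) :
    starPoly (starPoly p) = p := by
  have h0 : (starPoly p).coeff 0 ≠ 0 := by
    rw [coeff_zero_starPoly hm h]; exact inv_ne_zero h
  rw [starPoly_eq h0, coeff_zero_starPoly hm h, inv_inv, starPoly_eq h,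
    mirror_mul_of_domain, mirror_C, mirror_mirror, ← mul_assoc, ← map_mul,
    mul_inv_cancel₀ h, map_one, one_mul]

lemma natDegree_pos_of_irr {p : k[X]} (hirr : Irreducible p) : 0 < p.natDegree :=
  natDegree_pos_iff_degree_pos.mpr (degree_pos_of_irreducible hirr)

lemma not_isUnit_of_natDegree_pos' {p : k[X]} (h : 0 < p.natDegree) : ¬ IsUnit p := by
  intro hu
  rw [Polynomial.isUnit_iff_degree_eq_zero] at hu
  rw [natDegree_pos_iff_degree_pos, hu] at h
  exact lt_irrefl _ h

lemma isUnit_of_natDegree_eq_zero {p : k[X]} (hp : p ≠ 0) (h : p.natDegree = 0) : IsUnit p := by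
  obtain ⟨a, ha⟩ := Polynomial.natDegree_eq_zero.mp h
  have : a ≠ 0 := fun h0 => hp (by rw [← ha, h0, map_zero])
  rw [← ha]
  exact isUnit_C.mpr (isUnit_iff_ne_zero.mpr this)

lemma irreducible_starPoly {p : k[X]} (hm : p.Monic) (h : p.coeff 0 ≠ 0)
    (hirr : Irreducible p) : Irreducible (starPoly p) := by
  constructor
  · exact not_isUnit_of_natDegree_pos' (by
      rw [natDegree_starPoly h]; exact natDegree_pos_of_irr hirr)
  · intro a b hab
    have hne : starPoly p ≠ 0 := (monic_starPoly hm h).ne_zero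
    have ha : a ≠ 0 := fun h0 => hne (by rw [hab, h0, zero_mul])
    have hb : b ≠ 0 := fun h0 => hne (by rw [hab, h0, mul_zero])
    have hab0 : a.coeff 0 * b.coeff 0 ≠ 0 := by
      rw [← Polynomial.mul_coeff_zero, ← hab, coeff_zero_starPoly hm h]
      exact inv_ne_zero h
    have ha0 : a.coeff 0 ≠ 0 := fun h0 => hab0 (by rw [h0, zero_mul])
    have hb0 : b.coeff 0 ≠ 0 := fun h0 => hab0 (by rw [h0, mul_zero])
    have hp : p = starPoly a * starPoly b := by
      rw [← starPoly_mul, ← hab, starPoly_starPoly hm h]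
    rcases hirr.isUnit_or_isUnit hp with hu | hu
    · left
      apply isUnit_of_natDegree_eq_zero ha
      have := natDegree_starPoly ha0
      by_contra hd
      exact not_isUnit_of_natDegree_pos' (by omega : 0 < (starPoly a).natDegree) hu
    · right
      apply isUnit_of_natDegree_eq_zero hb
      have := natDegree_starPoly hb0
      by_contra hd
      exact not_isUnit_of_natDegree_pos' (by omega : 0 < (starPoly b).natDegree) hu

lemma selfdual_classify (hchar : (2 : k) ≠ 0) {g : k[X]} (hm : g.Monic)
    (hirr : Irreducible g) (h0 : g.coeff 0 ≠ 0) (hsd : starPoly g = g) :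
    g = X - 1 ∨ g = X + 1 ∨ (g = g.reverse ∧ Even g.natDegree) := by
  have hc : g.coeff 0 = 1 ∨ g.coeff 0 = -1 := by
    have h1 : (g.coeff 0)⁻¹ = g.coeff 0 := by
      conv_rhs => rw [← hsd]
      rw [coeff_zero_starPoly hm h0]
    have h2 : g.coeff 0 * g.coeff 0 = 1 := by
      have := congrArg (fun x => g.coeff 0 * x) h1
      simpa [mul_inv_cancel₀ h0] using this.symm
    have h3 : (g.coeff 0 - 1) * (g.coeff 0 + 1) = 0 := by linear_combination h2
    rcases mul_eq_zero.mp h3 with h | h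
    · left; linear_combination h
    · right; linear_combination h
  have hdeg1 : ∀ a : k, g.IsRoot a → g = X - C a := by
    intro a hroot
    have hd := Polynomial.degree_eq_one_of_irreducible_of_root hirr hroot
    have hnd : g.natDegree = 1 := natDegree_eq_of_degree_eq_some hd
    have heq := hm.eq_X_add_C hnd
    rw [heq] at hroot ⊢
    simp only [Polynomial.IsRoot, eval_add, eval_X, eval_C] at hroot
    have : g.coeff 0 = -a := by linear_combination hroot
    rw [this, map_neg, sub_eq_add_neg]
  rcases hc with hc | hc
  · -- symmetric
    have hrev : g = g.reverse := by
      conv_lhs => rw [← hsd]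
      rw [starPoly, hc, inv_one, map_one, one_mul]
    rcases Nat.even_or_odd g.natDegree with he | ho
    · exact Or.inr (Or.inr ⟨hrev, he⟩)
    · -- odd degree: root at -1, g = X + 1
      letI : Invertible (-1 : k) := ⟨-1, by ring, by ring⟩
      have key := Polynomial.eval₂_reverse_mul_pow (RingHom.id k) (-1 : k) g
      have key2 : g.reverse.eval (-1) * (-1) ^ g.natDegree = g.eval (-1) := by
        have hi : (⅟(-1 : k)) = -1 := rfl
        rw [hi] at key
        exact key
      rw [← hrev, ho.neg_one_pow] at key2
      have h2 : (2 : k) * g.eval (-1) = 0 := by linear_combination -key2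
      have hroot : g.IsRoot (-1) := by
        rcases mul_eq_zero.mp h2 with h | h
        · exact absurd h hchar
        · exact h
      have := hdeg1 (-1) hroot
      right; left
      rw [this, map_neg, map_one, sub_neg_eq_add]
  · -- antisymmetric: root at 1
    have hrev : g.reverse = -g := by
      have h1 : starPoly g = C (-1 : k)⁻¹ * g.reverse := by rw [starPoly, hc]
      rw [hsd] at h1
      have h2 : ((-1 : k))⁻¹ = -1 := by norm_num
      rw [h2, map_neg, map_one, neg_mul, one_mul] at h1
      linear_combination h1
    have hroot : g.IsRoot 1 := by
      have e1 : g.reverse.eval 1 = g.eval 1 := by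
        rw [reverse_eq_mirror h0, mirror_eval_one]
      rw [hrev, eval_neg] at e1
      have h2 : (2 : k) * g.eval 1 = 0 := by linear_combination -e1
      rcases mul_eq_zero.mp h2 with h | h
      · exact absurd h hchar
      · exact h
    have := hdeg1 1 hroot
    left; rw [this, map_one]

lemma key_induction (hchar : (2 : k) ≠ 0) :
    ∀ n : ℕ, ∀ F : k[X], F.natDegree ≤ n → F.Monic → F.coeff 0 ≠ 0 → starPoly F = F →
    ∃ s : Multiset k[X],
      (∀ g ∈ s, g.Monic ∧ (IsType0Pol g ∨ IsType1Pol g ∨ IsType2Pol g)) ∧ F = s.prod := by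
  intro n
  induction n using Nat.strong_induction_on with
  | _ n IH =>
  intro F hdeg hmon h0 hsd
  by_cases hF0 : F.natDegree = 0
  · exact ⟨0, by simp, by rw [hmon.natDegree_eq_zero.mp hF0, Multiset.prod_zero]⟩
  have hFne : F ≠ 0 := hmon.ne_zero
  have hnotunit : ¬ IsUnit F := not_isUnit_of_natDegree_pos' (Nat.pos_of_ne_zero hF0)
  obtain ⟨p, hpirr, hpdvd⟩ := WfDvdMonoid.exists_irreducible_factor hnotunit hFne
  classical
  set g := normalize p with hgdef
  have hgmon : g.Monic := Polynomial.monic_normalize hpirr.ne_zero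
  have hgirr : Irreducible g := (normalize_associated p).symm.irreducible hpirr
  have hgdvd : g ∣ F := normalize_dvd_iff.mpr hpdvd
  have hg0 : g.coeff 0 ≠ 0 := by
    intro hz
    exact h0 (Polynomial.X_dvd_iff.mp ((Polynomial.X_dvd_iff.mpr hz).trans hgdvd))
  have hgd : 0 < g.natDegree := natDegree_pos_of_irr hgirr
  obtain ⟨F₁, hF₁⟩ := hgdvd
  have hF₁mon : F₁.Monic := hgmon.of_mul_monic_left (hF₁ ▸ hmon)
  have hF₁0 : F₁.coeff 0 ≠ 0 := by
    intro hz
    apply h0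
    rw [hF₁, Polynomial.mul_coeff_zero, hz, mul_zero]
  have hdegF : F.natDegree = g.natDegree + F₁.natDegree := by
    rw [hF₁, Polynomial.natDegree_mul hgmon.ne_zero hF₁mon.ne_zero]
  by_cases hgg : starPoly g = g
  · -- self-dual factor
    have hsd1 : starPoly F₁ = F₁ := by
      apply mul_left_cancel₀ hgmon.ne_zero
      rw [← hgg, ← starPoly_mul, ← hF₁, hsd, hF₁, hgg]
    obtain ⟨s₁, hs₁, hs₁prod⟩ :=
      IH (n - 1) (by omega) F₁ (by omega) hF₁mon hF₁0 hsd1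
    refine ⟨g ::ₘ s₁, ?_, ?_⟩
    · intro h hh
      rcases Multiset.mem_cons.mp hh with rfl | hh
      · refine ⟨hgmon, ?_⟩
        rcases selfdual_classify hchar hgmon hgirr hg0 hgg with h1 | h1 | h1
        · exact Or.inl ⟨1, 0, by rw [h1, pow_one, pow_zero, mul_one]⟩
        · exact Or.inl ⟨0, 1, by rw [h1, pow_one, pow_zero, one_mul]⟩
        · refine Or.inr (Or.inl ⟨{g}, ?_, by simp⟩)
          intro x hx
          rw [Multiset.mem_singleton] at hx
          subst hx
          exact ⟨hgmon, hgirr, h1.1, h1.2⟩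
      · exact hs₁ h hh
    · rw [Multiset.prod_cons, ← hs₁prod, hF₁]
  · -- non self-dual factor
    set g' := starPoly g with hg'def
    have hg'mon : g'.Monic := monic_starPoly hgmon hg0
    have hg'irr : Irreducible g' := irreducible_starPoly hgmon hg0 hgirr
    have hg'0 : g'.coeff 0 ≠ 0 := by
      rw [hg'def, coeff_zero_starPoly hgmon hg0]; exact inv_ne_zero hg0
    have hg'dvd : g' ∣ F := by
      have : starPoly F = g' * starPoly F₁ := by rw [hF₁, starPoly_mul]
      rw [hsd] at this
      exact ⟨starPoly F₁, this⟩
    have hg'F₁ : g' ∣ F₁ := by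
      rcases (hg'irr.prime.2.2 g F₁ (hF₁ ▸ hg'dvd)) with hdg | hdF₁
      · exfalso
        apply hgg
        exact (eq_of_monic_of_associated hg'mon hgmon
          (hg'irr.associated_of_dvd hgirr hdg)) ▸ rfl
      · exact hdF₁
    obtain ⟨F₂, hF₂⟩ := hg'F₁
    have hgg'mon : (g * g').Monic := hgmon.mul hg'mon
    have hF₂mon : F₂.Monic := hg'mon.of_mul_monic_left (hF₂ ▸ hF₁mon)
    have hF₂0 : F₂.coeff 0 ≠ 0 := by
      intro hz
      apply hF₁0
      rw [hF₂, Polynomial.mul_coeff_zero, hz, mul_zero]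
    have hFfull : F = g * g' * F₂ := by rw [hF₁, hF₂, mul_assoc]
    have hsd2 : starPoly F₂ = F₂ := by
      apply mul_left_cancel₀ hgg'mon.ne_zero
      have h1 : starPoly F = g' * g * starPoly F₂ := by
        rw [hFfull, starPoly_mul, starPoly_mul, ← hg'def,
          starPoly_starPoly hgmon hg0]
      rw [hsd, hFfull] at h1
      rw [show g * g' * starPoly F₂ = g' * g * starPoly F₂ by ring, ← h1]
    have hg'd : 0 < g'.natDegree := natDegree_pos_of_irr hg'irr
    have hdegF2 : F.natDegree = g.natDegree + (g'.natDegree + F₂.natDegree) := by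
      rw [hdegF, hF₂, Polynomial.natDegree_mul hg'mon.ne_zero hF₂mon.ne_zero]
    obtain ⟨s₂, hs₂, hs₂prod⟩ :=
      IH (n - 1) (by omega) F₂ (by omega) hF₂mon hF₂0 hsd2
    have hneg : g ≠ -g' := by
      intro he
      apply hchar
      have := congrArg Polynomial.leadingCoeff he
      rw [hgmon.leadingCoeff, Polynomial.leadingCoeff_neg, hg'mon.leadingCoeff] at this
      linear_combination this
    refine ⟨(g * g') ::ₘ s₂, ?_, ?_⟩
    · intro h hh
      rcases Multiset.mem_cons.mp hh with rfl | hh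
      · refine ⟨hgg'mon, Or.inr (Or.inr ⟨{g}, ?_, by simp [hg'def]⟩)⟩
        intro x hx
        rw [Multiset.mem_singleton] at hx
        subst hx
        exact ⟨hgmon, hgirr, fun he => hgg he.symm, hneg⟩
      · exact hs₂ h hh
    · rw [Multiset.prod_cons, ← hs₂prod, hFfull]


end AuxLemmas

/-- Every monic `ε`-symmetric polynomial is a product of monic
polynomials of type 0, of type 1 and of type 2. -/
theorem monic_epsSymmetric_prod_type012
    (hchar : (2 : k) ≠ 0)
    (F : k[X]) (hF : F.Monic) (ε : k) (hε : ε = 1 ∨ ε = -1)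
    (hsymm : F = Polynomial.C ε * F.reverse) :
    ∃ s : Multiset k[X],
      (∀ g ∈ s, g.Monic ∧ (IsType0Pol g ∨ IsType1Pol g ∨ IsType2Pol g)) ∧ F = s.prod := by
  have h0 : F.coeff 0 = ε := by
    conv_lhs => rw [hsymm]
    rw [Polynomial.mul_coeff_zero, coeff_C_zero, coeff_zero_reverse, hF.leadingCoeff, mul_one]
  have hεne : ε ≠ 0 := by
    rcases hε with rfl | rfl
    · exact one_ne_zero
    · exact neg_ne_zero.mpr one_ne_zero
  have hsd : starPoly F = F := by
    rw [starPoly, h0]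
    have hinv : ε⁻¹ = ε := by rcases hε with rfl | rfl <;> norm_num
    rw [hinv, ← hsymm]
  exact key_induction hchar F.natDegree F le_rfl hF (h0 ▸ hεne) hsd

end
end

section
/- Let (V,q) be a quadratic space over a field k of characteristic ≠ 2, let t be an isometry of (V,q) and let F ∈ k[X] be the characteristic polynomial of t. Then det(q)·F(1)·F(−1) is a square in k (i.e. det(q)·F(1)·F(−1) ∈ k² = {a² : a ∈ k}, possibly 0). -/
open Polynomial

noncomputable section

variable {k : Type} [Field k]

section AuxSquare

open Matrix

variable {k : Type} [Field k]

/-- The Gram determinant of an alternating bilinear form is a square. -/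
lemma alt_gram_det_isSquare (n : ℕ) :
    ∀ (V : Type) [AddCommGroup V] [Module k V] [FiniteDimensional k V],
      Module.finrank k V = n →
      ∀ (B : LinearMap.BilinForm k V), B.IsAlt →
      ∀ (ι : Type) [Fintype ι] [DecidableEq ι] (b : Module.Basis ι k V),
      IsSquare (LinearMap.toMatrix₂ b b B).det := by
  induction n using Nat.strong_induction_on with
  | _ n ih =>
    intro V _ _ _ hrank B hB ι _ _ b
    rcases isEmpty_or_nonempty ι with hι | hι
    · rw [Matrix.det_isEmpty]; exact IsSquare.one
    by_cases hdet : (LinearMap.toMatrix₂ b b B).det = 0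
    · exact hdet ▸ ⟨0, (mul_zero 0).symm⟩
    have hsep : B.SeparatingLeft := LinearMap.separatingLeft_of_det_ne_zero b hdet
    set e := b (Classical.arbitrary ι) with he
    have he0 : e ≠ 0 := b.ne_zero _
    obtain ⟨y, hy⟩ : ∃ y, B e y ≠ 0 := by
      by_contra h
      push_neg at h
      exact he0 (hsep e h)
    set f := (B e y)⁻¹ • y with hf
    have hef : B e f = 1 := by
      rw [hf, _root_.map_smul, smul_eq_mul, inv_mul_cancel₀ hy]
    have hfe : B f e = -1 := by
      have h := LinearMap.IsAlt.neg hB f e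
      rw [hef] at h
      linear_combination -h
    have hee : B e e = 0 := hB e
    have hff : B f f = 0 := hB f
    have hli : LinearIndependent k ![e, f] := by
      rw [LinearIndependent.pair_iff]
      intro s t hst
      have h1 := congrArg (fun z => B z f) hst
      have h2 := congrArg (fun z => B z e) hst
      simp only [map_add, _root_.map_smul, LinearMap.map_smul, LinearMap.add_apply, LinearMap.smul_apply, LinearMap.smul_apply,
        smul_eq_mul, hef, hff, hee, hfe, map_zero, LinearMap.zero_apply] at h1 h2
      exact ⟨by linear_combination h1, by linear_combination -h2⟩
    set W := Submodule.span k (Set.range ![e, f]) with hW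
    have heW : e ∈ W := Submodule.subset_span ⟨0, rfl⟩
    have hfW : f ∈ W := Submodule.subset_span ⟨1, rfl⟩
    set bW : Module.Basis (Fin 2) k W := Module.Basis.span hli with hbW
    have hbWc : ∀ i : Fin 2, (bW i : V) = ![e, f] i := fun i => congrArg Subtype.val (Module.Basis.span_apply hli i)
    have hWrestr : (B.restrict W).Nondegenerate := by
      refine LinearMap.BilinForm.Nondegenerate.ofSeparatingLeft ?_
      intro x hx
      obtain ⟨cf, hcf⟩ := (Submodule.mem_span_range_iff_exists_fun k).mp x.2
      rw [Fin.sum_univ_two] at hcf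
      simp only [Matrix.cons_val_zero, Matrix.cons_val_one, Matrix.head_cons] at hcf
      have h1 : B (x : V) f = 0 := by simpa using hx ⟨f, hfW⟩
      have h2 : B (x : V) e = 0 := by simpa using hx ⟨e, heW⟩
      rw [show (x : V) = cf 0 • e + cf 1 • f from hcf.symm] at h1 h2
      simp only [map_add, _root_.map_smul, LinearMap.map_smul, LinearMap.add_apply, LinearMap.smul_apply, LinearMap.smul_apply,
        smul_eq_mul, hef, hff, hee, hfe] at h1 h2
      have hc0 : cf 0 = 0 := by linear_combination h1
      have hc1 : cf 1 = 0 := by linear_combination -h2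
      ext
      rw [← hcf, hc0, hc1]
      simp
    have hcompl : IsCompl W (B.orthogonal W) :=
      LinearMap.BilinForm.isCompl_orthogonal_of_restrict_nondegenerate hB.isRefl hWrestr
    set W' := B.orthogonal W with hW'
    set m := Module.finrank k W' with hm
    set bW' : Module.Basis (Fin m) k W' := Module.finBasis k W' with hbW'
    have hrW : Module.finrank k W = 2 := by
      rw [Module.finrank_eq_card_basis bW, Fintype.card_fin]
    have hmn : 2 + m = n := by
      rw [← hrank, ← hrW, hm, Submodule.finrank_add_eq_of_isCompl hcompl]
    have hmlt : m < n := by omega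
    set E := Submodule.prodEquivOfIsCompl W W' hcompl with hE
    set b₀ : Module.Basis (Fin 2 ⊕ Fin m) k V := (bW.prod bW').map E with hb₀
    have hb₀l : ∀ i, b₀ (Sum.inl i) = (bW i : V) := by
      intro i
      simp [hb₀, hE, Module.Basis.map_apply, Module.Basis.prod_apply,
        Submodule.coe_prodEquivOfIsCompl']
    have hb₀r : ∀ i, b₀ (Sum.inr i) = (bW' i : V) := by
      intro i
      simp [hb₀, hE, Module.Basis.map_apply, Module.Basis.prod_apply,
        Submodule.coe_prodEquivOfIsCompl']
    have horth : ∀ (w : W) (w' : W'), B (w : V) (w' : V) = 0 := by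
      intro w w'
      exact w'.2 (w : V) w.2
    have hM : LinearMap.toMatrix₂ b₀ b₀ B =
        Matrix.fromBlocks (!![0, 1; -1, 0]) 0 0
          (LinearMap.toMatrix₂ bW' bW' (B.restrict W')) := by
      ext i j
      rcases i with i | i <;> rcases j with j | j
      · rw [LinearMap.toMatrix₂_apply, hb₀l, hb₀l, Matrix.fromBlocks_apply₁₁]
        rw [hbWc, hbWc]
        fin_cases i <;> fin_cases j <;>
          simp [hee, hef, hfe, hff]
      · rw [LinearMap.toMatrix₂_apply, hb₀l, hb₀r, Matrix.fromBlocks_apply₁₂]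
        rw [horth]
        simp
      · rw [LinearMap.toMatrix₂_apply, hb₀r, hb₀l, Matrix.fromBlocks_apply₂₁]
        rw [hB.isRefl _ _ (horth _ _)]
        simp
      · simp [LinearMap.toMatrix₂_apply, LinearMap.BilinForm.restrict_apply,
          Matrix.fromBlocks_apply₂₂, hb₀r]
    have hsq₀ : IsSquare (LinearMap.toMatrix₂ b₀ b₀ B).det := by
      rw [hM, Matrix.det_fromBlocks_zero₂₁]
      have hA : (!![0, 1; -1, 0] : Matrix (Fin 2) (Fin 2) k).det = 1 := by
        simp [Matrix.det_fin_two_of]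
      rw [hA, one_mul]
      exact ih m hmlt W' rfl (B.restrict W')
        (fun x => by rw [LinearMap.BilinForm.restrict_apply]; exact hB _) (Fin m) bW'
    -- transfer to the basis `b`
    have hcard : Fintype.card (Fin 2 ⊕ Fin m) = Fintype.card ι := by
      rw [Fintype.card_sum, Fintype.card_fin, Fintype.card_fin]
      rw [hmn, ← hrank, Module.finrank_eq_card_basis b]
    set eq : (Fin 2 ⊕ Fin m) ≃ ι := Fintype.equivOfCardEq hcard with heq
    set b₁ : Module.Basis ι k V := b₀.reindex eq with hb₁
    have hsq₁ : IsSquare (LinearMap.toMatrix₂ b₁ b₁ B).det := by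
      have hsub : LinearMap.toMatrix₂ b₁ b₁ B =
          (LinearMap.toMatrix₂ b₀ b₀ B).submatrix eq.symm eq.symm := by
        ext i j
        simp [LinearMap.toMatrix₂_apply, hb₁, Module.Basis.reindex_apply, Matrix.submatrix_apply]
      rw [hsub, Matrix.det_submatrix_equiv_self]
      exact hsq₀
    obtain ⟨r, hr⟩ := hsq₁
    have hchg := LinearMap.toMatrix₂_mul_basis_toMatrix b₁ b₁ b b B
    have hdeteq : (LinearMap.toMatrix₂ b b B).det =
        ((b₁.toMatrix b).det * r) * ((b₁.toMatrix b).det * r) := by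
      rw [← hchg, Matrix.det_mul, Matrix.det_mul, Matrix.det_transpose, hr]
      ring
    exact ⟨_, hdeteq⟩

/-- The determinant of a skew-symmetric matrix over a field of characteristic `≠ 2`
is a square. -/
lemma skew_matrix_det_isSquare (hchar : (2 : k) ≠ 0) {ι : Type} [Fintype ι] [DecidableEq ι]
    (C : Matrix ι ι k) (hC : Cᵀ = -C) : IsSquare C.det := by
  classical
  set b : Module.Basis ι k (ι → k) := Pi.basisFun k ι with hb
  set B := Matrix.toLinearMap₂ b b C with hB
  have hmat : LinearMap.toMatrix₂ b b B = C := LinearMap.toMatrix₂_toLinearMap₂ b b C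
  have hBapp : ∀ x y : ι → k, B x y = ∑ i, ∑ j, x i * C i j * y j := by
    intro x y
    rw [hB, hb, Matrix.toLinearMap₂_basisFun, Matrix.toLinearMap₂'_apply]
    refine Finset.sum_congr rfl fun i _ => Finset.sum_congr rfl fun j _ => ?_
    simp only [smul_eq_mul]
    ring
  have hswap : ∀ i j, C j i = -C i j := by
    intro i j
    have h := congrFun (congrFun hC j) i
    simp only [Matrix.transpose_apply, Matrix.neg_apply] at h
    linear_combination h
  have hAlt : B.IsAlt := by
    intro x
    have h1 : B x x = ∑ i, ∑ j, x i * C i j * x j := hBapp x x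
    have h2 : B x x = -B x x := by
      nth_rewrite 1 [h1]
      rw [Finset.sum_comm]
      rw [h1, ← Finset.sum_neg_distrib]
      refine Finset.sum_congr rfl fun i _ => ?_
      rw [← Finset.sum_neg_distrib]
      refine Finset.sum_congr rfl fun j _ => ?_
      rw [hswap]
      ring
    have h3 : (2 : k) * B x x = 0 := by
      rw [two_mul]
      nth_rewrite 1 [h2]
      ring
    rcases mul_eq_zero.mp h3 with h | h
    · exact absurd h hchar
    · exact h
  have := alt_gram_det_isSquare (Module.finrank k (ι → k)) (ι → k) rfl B hAlt ι b
  rwa [hmat] at this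

/-- Evaluating the characteristic polynomial of a matrix. -/
lemma charpoly_eval_aux {ι : Type} [Fintype ι] [DecidableEq ι] (M : Matrix ι ι k) (r : k) :
    M.charpoly.eval r = (r • (1 : Matrix ι ι k) - M).det := by
  rw [Matrix.charpoly, eval_det, Matrix.matPolyEquiv_charmatrix]
  congr 1
  rw [Polynomial.eval_sub, Polynomial.eval_X, Polynomial.eval_C]
  congr 1
  ext i j
  simp [Matrix.scalar_apply, Matrix.smul_apply, Matrix.one_apply, Matrix.diagonal_apply]

end AuxSquare

open Matrix in
/-- **Prop. 5.1.** If `t` is an isometry of a quadratic space `q` with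
characteristic polynomial `F`, then `det(q)·F(1)·F(−1)` is a square in `k`. -/
theorem det_mul_charpoly_eval_isSquare
    (hchar : (2 : k) ≠ 0)
    {V : Type} [AddCommGroup V] [Module k V] [FiniteDimensional k V]
    (B : LinearMap.BilinForm k V) (hq : IsQuadraticSpace B)
    (t : V ≃ₗ[k] V) (ht : IsIsometryOf B t) :
    IsSquare (detOf B *
      ((LinearMap.charpoly t.toLinearMap).eval 1 *
        (LinearMap.charpoly t.toLinearMap).eval (-1))) := by
  classical
  set b := Module.finBasis k V with hb
  set G := gramOf B with hG
  set T := LinearMap.toMatrix b b t.toLinearMap with hT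
  have hGsym : Gᵀ = G := by
    ext i j
    rw [Matrix.transpose_apply, hG, gramOf, LinearMap.toMatrix₂_apply, LinearMap.toMatrix₂_apply]
    exact hq.1 _ _
  have hBc : B.compl₁₂ t.toLinearMap t.toLinearMap = B := by
    ext x y
    simpa [LinearMap.compl₁₂_apply] using ht x y
  have hTGT : Tᵀ * G * T = G := by
    have h := LinearMap.toMatrix₂_compl₁₂ b b b b B t.toLinearMap t.toLinearMap
    rw [hBc] at h
    rw [hG, gramOf, hT]
    exact h.symm
  have hsep : B.SeparatingLeft := fun x hx => hq.2 x hx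
  have hGdet : G.det ≠ 0 := by
    rw [hG, gramOf]
    exact (LinearMap.separatingLeft_iff_det_ne_zero b).mp hsep
  have hdT : T.det * T.det = 1 := by
    have h1 : (Tᵀ * G * T).det = G.det := by rw [hTGT]
    rw [Matrix.det_mul, Matrix.det_mul, Matrix.det_transpose] at h1
    have h2 : G.det * (T.det * T.det - 1) = 0 := by ring_nf; linear_combination h1
    rcases mul_eq_zero.mp h2 with h | h
    · exact absurd h hGdet
    · linear_combination h
  have hF1 : (LinearMap.charpoly t.toLinearMap).eval 1 = ((1 : k) • 1 - T).det := by
    rw [← LinearMap.charpoly_toMatrix t.toLinearMap b, ← hT, charpoly_eval_aux]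
  have hFm1 : (LinearMap.charpoly t.toLinearMap).eval (-1) = ((-1 : k) • 1 - T).det := by
    rw [← LinearMap.charpoly_toMatrix t.toLinearMap b, ← hT, charpoly_eval_aux]
  have hdetOf : detOf B = G.det := rfl
  rcases mul_self_eq_one_iff.mp hdT with hdT1 | hdTm1
  · -- det T = 1 : use the skew-symmetric matrix G*T - Tᵀ*G
    set C := G * T - Tᵀ * G with hCdef
    have hCskew : Cᵀ = -C := by
      rw [hCdef, Matrix.transpose_sub, Matrix.transpose_mul, Matrix.transpose_mul,
        Matrix.transpose_transpose, hGsym, neg_sub]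
    have hsq := skew_matrix_det_isSquare hchar C hCskew
    have hfac : C * T = G * ((T - 1) * (T + 1)) := by
      rw [hCdef, sub_mul, hTGT]
      noncomm_ring
    have hdets : C.det * T.det = G.det * ((T - 1).det * (T + 1).det) := by
      rw [← Matrix.det_mul, hfac, Matrix.det_mul, Matrix.det_mul]
    rw [hdT1, mul_one] at hdets
    have ha1 : ((1 : k) • (1 : Matrix _ _ k) - T) = -(T - 1) := by
      rw [one_smul, neg_sub]
    have ha2 : ((-1 : k) • (1 : Matrix _ _ k) - T) = -(T + 1) := by
      rw [neg_smul, one_smul]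
      ext i j
      simp [Matrix.neg_apply, Matrix.sub_apply, Matrix.add_apply]
      ring
    have hevals : (LinearMap.charpoly t.toLinearMap).eval 1 *
        (LinearMap.charpoly t.toLinearMap).eval (-1) = (T - 1).det * (T + 1).det := by
      rw [hF1, hFm1, ha1, ha2, Matrix.det_neg, Matrix.det_neg]
      have : ((-1 : k) ^ Fintype.card (Fin (Module.finrank k V))) ^ 2 = 1 := by
        rw [← pow_mul, mul_comm, pow_mul, neg_one_sq, one_pow]
      calc (-1 : k) ^ Fintype.card (Fin (Module.finrank k V)) * (T - 1).det *
            ((-1 : k) ^ Fintype.card (Fin (Module.finrank k V)) * (T + 1).det)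
          = ((-1 : k) ^ Fintype.card (Fin (Module.finrank k V))) ^ 2 *
            ((T - 1).det * (T + 1).det) := by ring
        _ = (T - 1).det * (T + 1).det := by rw [this, one_mul]
    rw [hdetOf, hevals, ← hdets]
    exact hsq
  · -- det T = -1 : then F(-1) = 0
    have key : Tᵀ * G * (1 + T) = (1 + Tᵀ) * G := by
      rw [mul_add, mul_one, hTGT, add_mul, one_mul, add_comm]
    have hd := congrArg Matrix.det key
    rw [Matrix.det_mul, Matrix.det_mul, Matrix.det_mul, Matrix.det_transpose, hdTm1] at hd
    have h1T : (1 + Tᵀ).det = (1 + T).det := by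
      rw [← Matrix.det_transpose (1 + T), Matrix.transpose_add, Matrix.transpose_one]
    rw [h1T] at hd
    have hz : (1 + T).det = 0 := by
      have h2 : (2 : k) * ((1 + T).det * G.det) = 0 := by ring_nf; linear_combination -hd
      rcases mul_eq_zero.mp h2 with h | h
      · exact absurd h hchar
      · rcases mul_eq_zero.mp h with h' | h'
        · exact h'
        · exact absurd h' hGdet
    have hzero : (LinearMap.charpoly t.toLinearMap).eval (-1) = 0 := by
      rw [hFm1]
      have ha2 : ((-1 : k) • (1 : Matrix _ _ k) - T) = -(1 + T) := by
        rw [neg_smul, one_smul]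
        ext i j
        simp [Matrix.neg_apply, Matrix.sub_apply, Matrix.add_apply]
        ring
      rw [ha2, Matrix.det_neg, hz, mul_zero]
    rw [hzero, mul_zero, mul_zero]
    exact ⟨0, (mul_zero 0).symm⟩


end
end

section
/- Let (V,q) be a quadratic space over a field k of characteristic ≠ 2, let t be an isometry of (V,q) and let F ∈ k[X] be the characteristic polynomial of t. If F(1)·F(−1) ≠ 0, then det(q) = F(1)·F(−1) in k*/k*², i.e. det(q)·F(1)·F(−1) is a non-zero square in k. -/
open Polynomial

noncomputable section

variable {k : Type} [Field k]

open Matrix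


lemma skew_diag {n : Type*} [Fintype n] (hchar : (2:k) ≠ 0)
    {A : Matrix n n k} (h : Aᵀ = -A) (i : n) : A i i = 0 := by
  have h1 := congrFun (congrFun h i) i
  simp only [transpose_apply, Matrix.neg_apply] at h1
  have h2 : 2 * A i i = 0 := by linear_combination h1
  rcases mul_eq_zero.1 h2 with h' | h'
  · exact absurd h' hchar
  · exact h'

theorem skew_det_sq (hchar : (2:k) ≠ 0) :
    ∀ n (A : Matrix (Fin n) (Fin n) k), Aᵀ = -A → A.det ≠ 0 → ∃ c : k, A.det = c ^ 2 := by
  intro n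
  induction n using Nat.strong_induction_on with
  | _ n ih =>
  intro A hskew hdet
  match n, ih with
  | 0, _ => exact ⟨1, by simp [Matrix.det_fin_zero]⟩
  | 1, _ => exact absurd (by rw [Matrix.det_fin_one, skew_diag hchar hskew]) hdet
  | (m+2), ih =>
    obtain ⟨j, hj0, hjne⟩ : ∃ j, A 0 j ≠ 0 ∧ j ≠ 0 := by
      by_contra hcon
      push_neg at hcon
      apply hdet
      apply Matrix.det_eq_zero_of_row_eq_zero 0
      intro j
      by_cases hj : j = 0
      · subst hj; exact skew_diag hchar hskew 0
      · by_contra hne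
        exact hj (hcon j hne)
    set σ : Equiv.Perm (Fin (m+2)) := Equiv.swap 1 j with hσ
    set A₁ : Matrix (Fin (m+2)) (Fin (m+2)) k := A.submatrix σ σ with hA₁
    have hdet₁ : A₁.det = A.det := Matrix.det_submatrix_equiv_self σ A
    have hskew₁ : A₁ᵀ = -A₁ := by
      ext i j'
      simp only [hA₁, transpose_apply, submatrix_apply, Matrix.neg_apply]
      have h5 := congrFun (congrFun hskew (σ i)) (σ j')
      simp only [transpose_apply, Matrix.neg_apply] at h5
      linear_combination h5
    have hσ0 : σ 0 = 0 := by
      rw [hσ]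
      exact Equiv.swap_apply_of_ne_of_ne zero_ne_one (Ne.symm hjne)
    have hσ1 : σ 1 = j := Equiv.swap_apply_left 1 j
    have ha : A₁ 0 1 = A 0 j := by rw [hA₁]; simp [submatrix_apply, hσ0, hσ1]
    set e : Fin 2 ⊕ Fin m ≃ Fin (m+2) := finSumFinEquiv.trans (finCongr (by omega)) with he
    set M : Matrix (Fin 2 ⊕ Fin m) (Fin 2 ⊕ Fin m) k := A₁.submatrix e e with hM
    have hdetM : M.det = A₁.det := Matrix.det_submatrix_equiv_self e A₁
    have hskewM : Mᵀ = -M := by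
      ext i j'
      simp only [hM, transpose_apply, submatrix_apply, Matrix.neg_apply]
      have h5 := congrFun (congrFun hskew₁ (e i)) (e j')
      simp only [transpose_apply, Matrix.neg_apply] at h5
      linear_combination h5
    have he0 : e (Sum.inl 0) = 0 := rfl
    have he1 : e (Sum.inl 1) = 1 := rfl
    set P := M.toBlocks₁₁ with hP
    set Bb := M.toBlocks₁₂ with hBb
    set C := M.toBlocks₂₁ with hC
    set D := M.toBlocks₂₂ with hD
    have hMblocks : M = Matrix.fromBlocks P Bb C D := (Matrix.fromBlocks_toBlocks M).symm
    have hMdiag : ∀ i, M i i = 0 := skew_diag hchar hskewM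
    have hP01 : P 0 1 = A 0 j := by
      have h6 : P 0 1 = A₁ (e (Sum.inl 0)) (e (Sum.inl 1)) := rfl
      rw [h6, he0, he1, ha]
    have hP10 : P 1 0 = -(A 0 j) := by
      have hs := congrFun (congrFun hskewM (Sum.inl 0)) (Sum.inl 1)
      simp only [transpose_apply, Matrix.neg_apply] at hs
      rw [← hP01]
      exact hs
    have hP00 : P 0 0 = 0 := hMdiag (Sum.inl 0)
    have hP11 : P 1 1 = 0 := hMdiag (Sum.inl 1)
    have hdetP : P.det = A 0 j * A 0 j := by
      rw [Matrix.det_fin_two, hP00, hP11, hP01, hP10]; ring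
    have hdetPne : P.det ≠ 0 := by rw [hdetP]; exact mul_ne_zero hj0 hj0
    haveI : Invertible P := P.invertibleOfIsUnitDet (Ne.isUnit hdetPne)
    have hdetblocks : M.det = P.det * (D - C * ⅟P * Bb).det := by
      rw [hMblocks]; exact Matrix.det_fromBlocks₁₁ P Bb C D
    set A' := D - C * ⅟P * Bb with hA'
    -- skewness relations
    have hPt : Pᵀ = -P := by
      ext a b; have := congrFun (congrFun hskewM (Sum.inl a)) (Sum.inl b); simpa [hP, Matrix.toBlocks₁₁] using this
    have hDt : Dᵀ = -D := by
      ext a b; have := congrFun (congrFun hskewM (Sum.inr a)) (Sum.inr b); simpa [hD, Matrix.toBlocks₂₂] using this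
    have hBt : Bbᵀ = -C := by
      ext a b; have := congrFun (congrFun hskewM (Sum.inr a)) (Sum.inl b); simpa [hBb, hC, Matrix.toBlocks₁₂, Matrix.toBlocks₂₁] using this
    have hCt : Cᵀ = -Bb := by
      ext a b; have := congrFun (congrFun hskewM (Sum.inl a)) (Sum.inr b); simpa [hC, hBb, Matrix.toBlocks₁₂, Matrix.toBlocks₂₁] using this
    have hPinv : (⅟P : Matrix (Fin 2) (Fin 2) k) = P⁻¹ := invOf_eq_nonsing_inv P
    have hPinvT : (P⁻¹)ᵀ = -P⁻¹ := by
      rw [Matrix.transpose_nonsing_inv, hPt]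
      apply Matrix.inv_eq_right_inv
      rw [Matrix.neg_mul, Matrix.mul_neg, neg_neg, Matrix.mul_nonsing_inv P (Ne.isUnit hdetPne)]
    have hskewA' : A'ᵀ = -A' := by
      rw [hA', hPinv, Matrix.transpose_sub, Matrix.transpose_mul, Matrix.transpose_mul,
        hDt, hBt, hCt, hPinvT]
      simp [Matrix.mul_assoc, Matrix.neg_mul, Matrix.mul_neg, sub_eq_add_neg]
      abel
    have hdetA' : A'.det ≠ 0 := by
      intro h0
      apply hdet
      rw [← hdet₁, ← hdetM, hdetblocks, h0, mul_zero]
    obtain ⟨c', hc'⟩ := ih m (by omega) A' hskewA' hdetA'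
    refine ⟨A 0 j * c', ?_⟩
    rw [← hdet₁, ← hdetM, hdetblocks, hc', hdetP]
    ring

theorem charpoly_eval_eq {n : ℕ} (M : Matrix (Fin n) (Fin n) k) (x : k) :
    M.charpoly.eval x = ((Matrix.scalar (Fin n) x) - M).det := by
  rw [Matrix.charpoly, _root_.eval_det, Matrix.matPolyEquiv_charmatrix]
  simp

/-- **Cor. 5.2.** If `t` is an isometry of a quadratic space `q` with
characteristic polynomial `F` and `F(1)·F(−1) ≠ 0`, then `det(q) = F(1)·F(−1)` in
`k*/k*²`. -/
theorem det_eq_charpoly_eval_of_ne_zero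
    (hchar : (2 : k) ≠ 0)
    {V : Type} [AddCommGroup V] [Module k V] [FiniteDimensional k V]
    (B : LinearMap.BilinForm k V) (hq : IsQuadraticSpace B)
    (t : V ≃ₗ[k] V) (ht : IsIsometryOf B t)
    (hF : (LinearMap.charpoly t.toLinearMap).eval 1 *
        (LinearMap.charpoly t.toLinearMap).eval (-1) ≠ 0) :
    ∃ c : k, c ≠ 0 ∧ detOf B =
      ((LinearMap.charpoly t.toLinearMap).eval 1 *
        (LinearMap.charpoly t.toLinearMap).eval (-1)) * c ^ 2 := by
  classical
  obtain ⟨sym, nondeg⟩ := hq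
  set b := Module.finBasis k V with hb
  set T := LinearMap.toMatrix b b t.toLinearMap with hT
  set G := gramOf B with hG
  have hFT : LinearMap.charpoly t.toLinearMap = T.charpoly :=
    (LinearMap.charpoly_toMatrix t.toLinearMap b).symm
  have hGdef : G = LinearMap.toMatrix₂ b b B := rfl
  -- isometry relation
  have hBc : B.compl₁₂ t.toLinearMap t.toLinearMap = B := by
    ext x y
    simpa using ht x y
  have h1 : Tᵀ * G * T = G := by
    have h2 := LinearMap.toMatrix₂_compl₁₂ b b b b B t.toLinearMap t.toLinearMap
    rw [hBc] at h2
    rw [hGdef, ← h2]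
  -- symmetry of G
  have hGsym : Gᵀ = G := by
    ext i j
    rw [hGdef]
    simp only [Matrix.transpose_apply, LinearMap.toMatrix₂_apply]
    exact sym _ _
  -- nondegeneracy
  have hGdet : G.det ≠ 0 := by
    have hnd : B.Nondegenerate := ⟨nondeg, fun y hy => nondeg y (fun x => by rw [sym]; exact hy x)⟩
    rw [LinearMap.BilinForm.nondegenerate_iff_det_ne_zero b] at hnd
    exact hnd
  -- T is invertible with determinant 1
  have hcomp : t.toLinearMap ∘ₗ t.symm.toLinearMap = LinearMap.id := by
    ext x; simp
  have hTinv : T * LinearMap.toMatrix b b t.symm.toLinearMap = 1 := by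
    rw [hT, ← LinearMap.toMatrix_comp b b b, hcomp, LinearMap.toMatrix_id]
  have hTunit : IsUnit T.det := by
    apply IsUnit.of_mul_eq_one (LinearMap.toMatrix b b t.symm.toLinearMap).det
    rw [← Matrix.det_mul, hTinv, Matrix.det_one]
  -- evaluations of the characteristic polynomial
  have hF1 : (LinearMap.charpoly t.toLinearMap).eval 1 = (1 - T).det := by
    rw [hFT, charpoly_eval_eq, _root_.map_one]
  have hFm1 : (LinearMap.charpoly t.toLinearMap).eval (-1) =
      (-1 : k) ^ (Module.finrank k V) * (1 + T).det := by
    rw [hFT, charpoly_eval_eq]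
    have h3 : Matrix.scalar (Fin (Module.finrank k V)) (-1 : k) - T = -(1 + T) := by
      rw [_root_.map_neg, _root_.map_one, neg_add]
      abel
    rw [h3, Matrix.det_neg, Fintype.card_fin]
  set F1 : k := (1 - T).det with hF1d
  set F2 : k := (1 + T).det with hF2d
  have hF1ne : F1 ≠ 0 := by
    intro h0
    apply hF
    rw [hF1, h0, zero_mul]
  have hF2ne : F2 ≠ 0 := by
    intro h0
    apply hF
    rw [hFm1, h0, mul_zero, mul_zero]
  -- det T = 1
  have hkey : (1 + Tᵀ) * (G * T) = G * (T + 1) := by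
    rw [Matrix.add_mul, Matrix.one_mul, ← Matrix.mul_assoc, h1, Matrix.mul_add, Matrix.mul_one,
      add_comm]
  have hdetT : T.det = 1 := by
    have h4 := congrArg Matrix.det hkey
    rw [Matrix.det_mul, Matrix.det_mul, Matrix.det_mul] at h4
    have h5 : (1 + Tᵀ).det = F2 := by
      rw [show (1 + Tᵀ) = (1 + T)ᵀ by rw [Matrix.transpose_add, Matrix.transpose_one],
        Matrix.det_transpose, hF2d]
    have h6 : (T + 1).det = F2 := by rw [add_comm, hF2d]
    rw [h5, h6] at h4
    have h8 : F2 * G.det ≠ 0 := mul_ne_zero hF2ne hGdet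
    apply mul_left_cancel₀ h8
    rw [mul_one]
    linear_combination h4
  -- the skew-symmetric matrix H
  set H := G * T - Tᵀ * G with hH
  have hHskew : Hᵀ = -H := by
    rw [hH, Matrix.transpose_sub, Matrix.transpose_mul, Matrix.transpose_mul,
      Matrix.transpose_transpose, hGsym, neg_sub]
  have hHT : H * T = G * (T * T - 1) := by
    rw [hH, Matrix.sub_mul, h1, Matrix.mul_sub, Matrix.mul_one, Matrix.mul_assoc]
  have hTT : T * T - 1 = (T - 1) * (T + 1) := by noncomm_ring
  have hdetTm1 : (T - 1).det = (-1 : k) ^ (Module.finrank k V) * F1 := by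
    rw [show T - 1 = -(1 - T) from by rw [neg_sub], Matrix.det_neg, Fintype.card_fin, hF1d]
  have hdetH : H.det = G.det * ((-1 : k) ^ (Module.finrank k V) * F1 * F2) := by
    have h9 := congrArg Matrix.det hHT
    rw [Matrix.det_mul, hdetT, mul_one, hTT, Matrix.det_mul, Matrix.det_mul, hdetTm1] at h9
    rw [h9, show (T + 1).det = F2 from by rw [add_comm, hF2d]]
  have hdetHne : H.det ≠ 0 := by
    rw [hdetH]
    exact mul_ne_zero hGdet (mul_ne_zero (mul_ne_zero (pow_ne_zero _ (neg_ne_zero.2 one_ne_zero))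
      hF1ne) hF2ne)
  obtain ⟨c₀, hc₀⟩ := skew_det_sq hchar (Module.finrank k V) H hHskew hdetHne
  have hc₀ne : c₀ ≠ 0 := by
    intro h0
    rw [h0, pow_two, mul_zero] at hc₀
    exact hdetHne hc₀
  -- assemble
  set E : k := (LinearMap.charpoly t.toLinearMap).eval 1 *
      (LinearMap.charpoly t.toLinearMap).eval (-1) with hE
  have hEval : E = (-1 : k) ^ (Module.finrank k V) * F1 * F2 := by
    rw [hE, hF1, hFm1]
    ring
  have hEne : E ≠ 0 := hF
  refine ⟨c₀ / E, div_ne_zero hc₀ne hEne, ?_⟩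
  have hdetOf : detOf B = G.det := rfl
  rw [hdetOf]
  have h10 : G.det * E = c₀ ^ 2 := by
    rw [← hc₀, hdetH, hEval]
  field_simp
  linear_combination h10


end
end
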